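/- Every stepwise irregular graph is bipartite. -/

import Mathlib

open SimpleGraph

noncomputable def deg {V : Type*} (G : SimpleGraph V) (v : V) : ℕ := (G.neighborSet v).ncard

/-- A graph is stepwise irregular if for every edge the endpoint degrees differ by exactly 1. -/
def SI {V : Type*} (G : SimpleGraph V) : Prop :=
  ∀ u v, G.Adj u v → |(deg G u : ℤ) - (deg G v : ℤ)| = 1

theorem stmt_1 {V : Type*} [Fintype V] (G : SimpleGraph V) (hSI : SI G) :
    G.Colorable 2 := by
  refine ⟨⟨fun v => Fin.ofNat 2 (deg G v), ?_⟩⟩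
  intro u v huv h
  have h1 := hSI u v huv
  have h2 : ((deg G u : ℤ) - deg G v) % 2 = 0 := by
    have : (deg G u : ℤ) % 2 = (deg G v : ℤ) % 2 := by
      have := congrArg Fin.val h
      simp [Fin.val_natCast, Fin.val_ofNat] at this
      omega
    omega
  rcases abs_eq (by norm_num : (0:ℤ) ≤ 1) |>.mp h1 with h | h <;> omega
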